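/- arXiv:2202.04125 — 3 statements merged into one kernel-verified Lean document; each statement's English description precedes it below -/
import Mathlib

section
/- Let ρ, μ, ω, R, L, h be positive reals, let α = R√(ρω/μ), let λ = exp(3πĵ/4)·α/R, and assume J₀(λR) ≠ 0. Let u(r) = −(ĵ h R²/(L μ α²)) · [1 − J₀(λ r)/J₀(λR)] be the Womersley velocity profile. Then the volumetric flow rate through the pipe cross-section equals ∫₀^R 2πr · u(r) dr = (−ĵ π h R⁴/(L μ α²)) · [1 + 2 exp(πĵ/4) J₁(exp(3πĵ/4) α) / (α J₀(exp(3πĵ/4) α))]. -/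
open Complex Real

section Auxiliary

open MeasureTheory

lemma womersley_summable_aux (x : ℝ) :
    Summable fun k : ℕ => x ^ (2*k) / ((k.factorial : ℝ))^2 := by
  have : Summable fun k : ℕ => (x^2) ^ k / ((k.factorial : ℝ))^2 := by
    refine Summable.of_nonneg_of_le (fun k => by positivity) (fun k => ?_)
      (Real.summable_pow_div_factorial (x^2))
    have h1 : (1:ℝ) ≤ (k.factorial : ℝ) := by exact_mod_cast k.factorial_pos
    have h2 : (0:ℝ) < (k.factorial : ℝ) := by exact_mod_cast k.factorial_pos
    exact div_le_div_of_nonneg_left (by positivity) h2 (by nlinarith)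
  simpa [pow_mul] using this

lemma womersley_alg_aux (P Rc l f m p s e : ℂ) (hl : l ≠ 0) (hf : f ≠ 0) (hm : m ≠ 0) :
    2*P*e*p/f^2 * (s*Rc^2)/(2*m) = 2*P*Rc/l * (e * ((l*Rc/2) * (p*s)) / (f*(m*f))) := by
  have hl' : l*l⁻¹ = 1 := mul_inv_cancel₀ hl
  have hf2 : (f^2)⁻¹ = f⁻¹*f⁻¹ := by rw [sq, mul_inv]
  simp only [div_eq_mul_inv, mul_inv, hf2]
  linear_combination (-(2*(2:ℂ)⁻¹)*(P*e*p*s*Rc^2*f⁻¹*f⁻¹*m⁻¹)) * hl'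

lemma womersley_alg2 (P H R L M A E J K : ℂ) (hR : R ≠ 0) (hL : L ≠ 0) (hM : M ≠ 0)
    (hA : A ≠ 0) (hE : E ≠ 0) (hJ : J ≠ 0) :
    -(I * H * R ^ 2 / (L * M * A ^ 2)) * (P * R ^ 2)
      - -(I * H * R ^ 2 / (L * M * A ^ 2)) / J * (2 * P * R / (E * A / R) * K)
      = -I * P * H * R ^ 4 / (L * M * A ^ 2) * (1 + 2 * (-E⁻¹) * K / (A * J)) := by
  field_simp
  ring

end Auxiliary

/-- Bessel function of the first kind of order zero, defined by its power series. -/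
noncomputable def J0 (z : ℂ) : ℂ :=
  ∑' k : ℕ, (-1 : ℂ) ^ k * (z / 2) ^ (2 * k) / ((k.factorial : ℂ)) ^ 2

/-- Bessel function of the first kind of order one, defined by its power series. -/
noncomputable def J1 (z : ℂ) : ℂ :=
  ∑' k : ℕ, (-1 : ℂ) ^ k * (z / 2) ^ (2 * k + 1) / ((k.factorial : ℂ) * ((k + 1).factorial : ℂ))

section Bessel

open MeasureTheory

lemma J0_continuousOn (l : ℂ) (R : ℝ) (hR : 0 < R) :
    ContinuousOn (fun r : ℝ => J0 (l * (r:ℂ))) (Set.uIcc 0 R) := by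
  simp only [J0]
  refine continuousOn_tsum (fun k => (Continuous.continuousOn (by fun_prop)))
    (womersley_summable_aux (‖l‖*R/2)) fun k r hr => ?_
  rw [Set.uIcc_of_le hR.le] at hr
  have h1 : |r| ≤ R := by
    rw [abs_le]; exact ⟨by linarith [hr.1], hr.2⟩
  have hfac : (0:ℝ) < (k.factorial:ℝ) := by exact_mod_cast k.factorial_pos
  have : ‖(-1:ℂ)^k * ((l*(r:ℂ))/2)^(2*k) / ((k.factorial:ℂ))^2‖
      = (‖l‖*|r|/2)^(2*k)/((k.factorial:ℝ))^2 := by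
    simp [norm_mul, norm_div, norm_pow, mul_div_assoc]
  rw [this]
  gcongr

lemma bessel_integral (R : ℝ) (hR : 0 < R) (l : ℂ) (hl : l ≠ 0) :
    ∫ r in (0:ℝ)..R, (2 * (π:ℂ) * (r:ℂ)) * J0 (l * (r:ℂ))
      = 2 * (π:ℂ) * (R:ℂ) / l * J1 (l * (R:ℂ)) := by
  set F : ℕ → ℝ → ℂ := fun k r =>
    (2 * (π:ℂ) * (r:ℂ)) * ((-1:ℂ)^k * ((l * (r:ℂ))/2)^(2*k) / ((k.factorial:ℂ))^2) with hF
  have hFcont : ∀ k, Continuous (F k) := by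
    intro k; simp only [hF]; fun_prop
  have hint : ∀ k, Integrable (F k) (volume.restrict (Set.Ioc 0 R)) := fun k =>
    (hFcont k).integrableOn_Ioc
  have hnorm : ∀ k, ∀ r ∈ Set.Ioc (0:ℝ) R,
      ‖F k r‖ ≤ 2*π*R*((‖l‖*R/2)^(2*k)/((k.factorial:ℝ))^2) := by
    intro k r hr
    have h0 : (0:ℝ) < r := hr.1
    have h1 : r ≤ R := hr.2
    have : ‖F k r‖ = 2*π*r*((‖l‖*r/2)^(2*k)/((k.factorial:ℝ))^2) := by
      simp [hF, norm_mul, norm_div, norm_pow, abs_of_pos h0, abs_of_pos Real.pi_pos,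
        mul_div_assoc]
    rw [this]
    have hfac : (0:ℝ) < (k.factorial:ℝ) := by exact_mod_cast k.factorial_pos
    gcongr
  have hsum : Summable fun k => ∫ r in Set.Ioc (0:ℝ) R, ‖F k r‖ := by
    refine Summable.of_nonneg_of_le
      (fun k => integral_nonneg fun _ => norm_nonneg _) (fun k => ?_)
      ((womersley_summable_aux (‖l‖*R/2)).mul_left (2*π*R*R))
    calc ∫ r in Set.Ioc (0:ℝ) R, ‖F k r‖
        ≤ ∫ _ in Set.Ioc (0:ℝ) R, 2*π*R*((‖l‖*R/2)^(2*k)/((k.factorial:ℝ))^2) := by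
          refine setIntegral_mono_on (hint k).norm ?_ measurableSet_Ioc (hnorm k)
          exact integrableOn_const measure_Ioc_lt_top.ne
      _ = 2*π*R*R * ((‖l‖*R/2)^(2*k)/((k.factorial:ℝ))^2) := by
          rw [setIntegral_const, Real.volume_real_Ioc_of_le hR.le, smul_eq_mul, sub_zero]
          ring
  have key : ∫ r in (0:ℝ)..R, (2 * (π:ℂ) * (r:ℂ)) * J0 (l * (r:ℂ))
      = ∑' k, ∫ r in Set.Ioc (0:ℝ) R, F k r := by
    rw [intervalIntegral.integral_of_le hR.le]
    rw [integral_tsum_of_summable_integral_norm hint hsum]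
    refine setIntegral_congr_fun measurableSet_Ioc fun r _ => ?_
    rw [J0, ← tsum_mul_left]
  rw [key]
  have hFval : ∀ k, ∫ r in Set.Ioc (0:ℝ) R, F k r
      = (2*(π:ℂ)*(-1:ℂ)^k*(l/2)^(2*k)/((k.factorial:ℂ))^2) * (R:ℂ)^(2*k+2)/(2*(k:ℂ)+2) := by
    intro k
    rw [← intervalIntegral.integral_of_le hR.le]
    have : ∀ r : ℝ, F k r
        = (2*(π:ℂ)*(-1:ℂ)^k*(l/2)^(2*k)/((k.factorial:ℂ))^2) * ((r^(2*k+1) : ℝ) : ℂ) := by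
      intro r
      simp only [hF]
      push_cast
      ring
    simp_rw [this]
    rw [intervalIntegral.integral_const_mul, intervalIntegral.integral_ofReal,
      integral_pow]
    push_cast
    have h2k : (2*(k:ℂ)+2) ≠ 0 := by
      have : ((k:ℂ)+1) ≠ 0 := Nat.cast_add_one_ne_zero k
      intro h; apply this; linear_combination h/2
    have hfac : (k.factorial:ℂ) ≠ 0 := Nat.cast_ne_zero.mpr k.factorial_ne_zero
    field_simp
    have h3 : (2*(k:ℂ)+1+1) = 2*((k:ℂ)+1) := by ring
    have hk1 : ((k:ℂ)+1) ≠ 0 := Nat.cast_add_one_ne_zero k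
    rw [zero_pow (by omega), sub_zero, h3, div_eq_iff (mul_ne_zero two_ne_zero hk1)]
    ring
  simp_rw [hFval]
  rw [J1, ← tsum_mul_left]
  refine tsum_congr fun k => ?_
  have hfs : (((k+1).factorial:ℂ)) = ((k:ℂ)+1) * (k.factorial:ℂ) := by
    rw [Nat.factorial_succ]; push_cast; ring
  have h22 : (2*(k:ℂ)+2) = 2*((k:ℂ)+1) := by ring
  have hsplit : ((l*(R:ℂ))/2)^(2*k+1) = (l*(R:ℂ)/2) * ((l/2)^(2*k) * (R:ℂ)^(2*k)) := by
    rw [pow_succ, ← mul_pow]; ring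
  have hR2 : ((R:ℂ))^(2*k+2) = (R:ℂ)^(2*k) * (R:ℂ)^2 := by rw [← pow_add]
  rw [hfs, h22, hsplit, hR2]
  exact womersley_alg_aux _ _ _ _ _ _ _ _ hl
    (Nat.cast_ne_zero.mpr k.factorial_ne_zero) (Nat.cast_add_one_ne_zero k)

end Bessel

theorem womersley_flow_rate
    (ρ μ ω R L h : ℝ) (hρ : 0 < ρ) (hμ : 0 < μ) (hω : 0 < ω)
    (hR : 0 < R) (hL : 0 < L) (hh : 0 < h)
    (α : ℝ) (hα : α = R * Real.sqrt (ρ * ω / μ))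
    (l : ℂ) (hl : l = Complex.exp (3 * (π : ℂ) * I / 4) * (α : ℂ) / (R : ℂ))
    (hJ0 : J0 (l * (R : ℂ)) ≠ 0)
    (u : ℝ → ℂ)
    (hu : u = fun r : ℝ =>
      -(I * (h : ℂ) * (R : ℂ) ^ 2 / ((L : ℂ) * (μ : ℂ) * (α : ℂ) ^ 2)) *
        (1 - J0 (l * (r : ℂ)) / J0 (l * (R : ℂ)))) :
    ∫ r in (0 : ℝ)..R, (2 * (π : ℂ) * (r : ℂ)) * u r
      = (-I * (π : ℂ) * (h : ℂ) * (R : ℂ) ^ 4 / ((L : ℂ) * (μ : ℂ) * (α : ℂ) ^ 2)) *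
        (1 + 2 * Complex.exp ((π : ℂ) * I / 4) * J1 (Complex.exp (3 * (π : ℂ) * I / 4) * (α : ℂ))
          / ((α : ℂ) * J0 (Complex.exp (3 * (π : ℂ) * I / 4) * (α : ℂ)))) := by
  have hRne : (R:ℂ) ≠ 0 := Complex.ofReal_ne_zero.mpr hR.ne'
  have hαpos : 0 < α := by
    rw [hα]
    have : 0 < ρ * ω / μ := by positivity
    positivity
  have hαne : (α:ℂ) ≠ 0 := Complex.ofReal_ne_zero.mpr hαpos.ne'
  have hLne : (L:ℂ) ≠ 0 := Complex.ofReal_ne_zero.mpr hL.ne'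
  have hμne : (μ:ℂ) ≠ 0 := Complex.ofReal_ne_zero.mpr hμ.ne'
  set E : ℂ := Complex.exp (3 * (π : ℂ) * I / 4) with hE
  have hEne : E ≠ 0 := Complex.exp_ne_zero _
  have hlne : l ≠ 0 := by
    rw [hl]; exact div_ne_zero (mul_ne_zero hEne hαne) hRne
  have hlR : l * (R:ℂ) = E * (α:ℂ) := by rw [hl]; field_simp
  have he : Complex.exp ((π:ℂ) * I / 4) = -E⁻¹ := by
    have h1 : Complex.exp ((π:ℂ) * I / 4) * E = -1 := by
      rw [hE, ← Complex.exp_add]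
      have : (π:ℂ) * I / 4 + 3 * (π:ℂ) * I / 4 = (π:ℂ) * I := by ring
      rw [this, Complex.exp_pi_mul_I]
    field_simp
    linear_combination h1
  set c : ℂ := -(I * (h : ℂ) * (R : ℂ) ^ 2 / ((L : ℂ) * (μ : ℂ) * (α : ℂ) ^ 2)) with hc
  have hig : IntervalIntegrable (fun r : ℝ => (2 * (π:ℂ) * (r:ℂ)) * J0 (l * (r:ℂ)))
      MeasureTheory.volume 0 R :=
    (ContinuousOn.mul (Continuous.continuousOn (by fun_prop))
      (J0_continuousOn l R hR)).intervalIntegrable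
  have hig2 : IntervalIntegrable (fun r : ℝ => (2 * (π:ℂ) * (r:ℂ)))
      MeasureTheory.volume 0 R :=
    (Continuous.intervalIntegrable (by fun_prop) 0 R)
  have hsplit : ∀ r : ℝ, (2 * (π : ℂ) * (r : ℂ)) * u r
      = c * (2 * (π:ℂ) * (r:ℂ))
        - (c / J0 (l * (R:ℂ))) * ((2 * (π:ℂ) * (r:ℂ)) * J0 (l * (r:ℂ))) := by
    intro r; rw [hu]; simp only [hc]; ring
  simp_rw [hsplit]
  rw [intervalIntegral.integral_sub (hig2.const_mul c) (hig.const_mul _),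
    intervalIntegral.integral_const_mul (c / J0 (l * (R:ℂ))),
    intervalIntegral.integral_const_mul c,
    bessel_integral R hR l hlne]
  have hint1 : ∫ r in (0:ℝ)..R, (2 * (π:ℂ) * (r:ℂ)) = (π:ℂ) * (R:ℂ)^2 := by
    rw [intervalIntegral.integral_const_mul]
    rw [intervalIntegral.integral_ofReal, integral_id]
    push_cast
    ring
  rw [hint1, hlR, he, hl, hc]
  rw [hlR] at hJ0
  exact womersley_alg2 (π:ℂ) (h:ℂ) (R:ℂ) (L:ℂ) (μ:ℂ) (α:ℂ) E _ _
    hRne hLne hμne hαne hEne hJ0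
end

section
/- Let ρ, μ, R, L, h be positive reals and for α > 0 set λ(α) = exp(3πĵ/4)·α/R and u_α(r) = −(ĵ h R²/(L μ α²)) · [1 − J₀(λ(α) r)/J₀(λ(α) R)] (the Womersley velocity profile at Womersley number α). Then for every fixed r ∈ [0, R], the velocity converges to the steady Poiseuille profile in the quasi-steady limit: u_α(r) → h(R² − r²)/(4μL) as α → 0⁺. -/
open Complex Real Filter Topology

/-- The entire function `F(w) = ∑ (-1)^k w^k / (k!)^2`, so that `J0 z = F ((z/2)^2)`. -/
noncomputable def Fc (w : ℂ) : ℂ :=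
  ∑' k : ℕ, ((-1 : ℂ) ^ k / ((k.factorial : ℂ)) ^ 2) * w ^ k

/-- The formal power series of `Fc`. -/
noncomputable def Fser : FormalMultilinearSeries ℂ ℂ ℂ := fun n =>
  ((-1 : ℂ) ^ n / ((n.factorial : ℂ)) ^ 2) • ContinuousMultilinearMap.mkPiAlgebraFin ℂ n ℂ

lemma Fser_apply (n : ℕ) (w : ℂ) :
    Fser n (fun _ => w) = ((-1 : ℂ) ^ n / ((n.factorial : ℂ)) ^ 2) * w ^ n := by
  rw [show Fser n = ((-1 : ℂ) ^ n / ((n.factorial : ℂ)) ^ 2) •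
      ContinuousMultilinearMap.mkPiAlgebraFin ℂ n ℂ from rfl,
    ContinuousMultilinearMap.smul_apply, ContinuousMultilinearMap.mkPiAlgebraFin_apply]
  simp [List.ofFn_const, smul_eq_mul]

lemma Fser_radius_pos : (0 : ENNReal) < Fser.radius := by
  have h1 : (1 : NNReal) ≤ Fser.radius := by
    apply FormalMultilinearSeries.le_radius_of_bound _ 1
    intro n
    rw [NNReal.coe_one, one_pow, mul_one]
    have hFn : Fser n = ((-1 : ℂ) ^ n / ((n.factorial : ℂ)) ^ 2) •
        ContinuousMultilinearMap.mkPiAlgebraFin ℂ n ℂ := rfl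
    calc ‖Fser n‖ ≤ ‖((-1 : ℂ) ^ n / ((n.factorial : ℂ)) ^ 2)‖ *
        ‖ContinuousMultilinearMap.mkPiAlgebraFin ℂ n ℂ‖ := by
          rw [hFn]
          exact norm_smul_le ((-1 : ℂ) ^ n / ((n.factorial : ℂ)) ^ 2)
            (ContinuousMultilinearMap.mkPiAlgebraFin ℂ n ℂ)
      _ ≤ 1 * 1 := by
          apply mul_le_mul _ _ (norm_nonneg _) zero_le_one
          · rw [norm_div, norm_pow, norm_pow]
            simp only [norm_neg, norm_one, one_pow, Complex.norm_natCast]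
            rw [div_le_one (by positivity)]
            exact one_le_pow₀ (by exact_mod_cast n.factorial_pos)
          · simpa using ContinuousMultilinearMap.norm_mkPiAlgebraFin_le (𝕜 := ℂ) (n := n) (A := ℂ)
      _ = 1 := one_mul 1
  exact lt_of_lt_of_le (by norm_num) h1

lemma hFc : HasFPowerSeriesAt Fc Fser 0 := by
  have h : HasFPowerSeriesOnBall Fser.sum Fser 0 Fser.radius :=
    Fser.hasFPowerSeriesOnBall Fser_radius_pos
  have hEq : Fc = Fser.sum := by
    funext w
    rw [Fc, FormalMultilinearSeries.sum]
    exact tsum_congr fun n => by rw [Fser_apply]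
  rw [hEq]
  exact h.hasFPowerSeriesAt

lemma Fc_zero : Fc 0 = 1 := by
  rw [Fc, tsum_eq_single 0]
  · simp
  · intro k hk
    simp [zero_pow hk]

lemma Fc_hasDerivAt : HasDerivAt Fc (-1) 0 := by
  have := hFc.hasDerivAt
  rw [Fser_apply 1 1] at this
  simpa using this

lemma J0_eq_Fc (z : ℂ) : J0 z = Fc ((z / 2) ^ 2) := by
  unfold J0 Fc
  refine tsum_congr fun k => ?_
  rw [← pow_mul]
  ring

lemma exp_sq : Complex.exp (3 * (π : ℂ) * I / 4) ^ 2 = -I := by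
  rw [sq, ← Complex.exp_add]
  have h : 3 * (π : ℂ) * I / 4 + 3 * (π : ℂ) * I / 4 = ((3 * π / 2 : ℝ) : ℂ) * I := by
    push_cast; ring
  rw [h, Complex.exp_mul_I, ← Complex.ofReal_cos, ← Complex.ofReal_sin]
  have hc : Real.cos (3 * π / 2) = 0 := by
    have : (3 : ℝ) * π / 2 = π + π / 2 := by ring
    rw [this, Real.cos_add]; simp
  have hs : Real.sin (3 * π / 2) = -1 := by
    have : (3 : ℝ) * π / 2 = π + π / 2 := by ring
    rw [this, Real.sin_add]; simp
  rw [hc, hs]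
  simp

theorem womersley_profile_tendsto_poiseuille
    (ρ μ R L h : ℝ) (hρ : 0 < ρ) (hμ : 0 < μ) (hR : 0 < R) (hL : 0 < L) (hh : 0 < h)
    (r : ℝ) (hr : r ∈ Set.Icc (0 : ℝ) R) :
    Tendsto
      (fun α : ℝ =>
        -(I * (h : ℂ) * (R : ℂ) ^ 2 / ((L : ℂ) * (μ : ℂ) * (α : ℂ) ^ 2)) *
          (1 - J0 (Complex.exp (3 * (π : ℂ) * I / 4) * (α : ℂ) / (R : ℂ) * (r : ℂ))
              / J0 (Complex.exp (3 * (π : ℂ) * I / 4) * (α : ℂ) / (R : ℂ) * (R : ℂ))))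
      (nhdsWithin 0 (Set.Ioi 0))
      (nhds ((h * (R ^ 2 - r ^ 2) / (4 * μ * L) : ℝ) : ℂ)) := by
  have Rne : (R : ℂ) ≠ 0 := by exact_mod_cast hR.ne'
  have μne : (μ : ℂ) ≠ 0 := by exact_mod_cast hμ.ne'
  have Lne : (L : ℂ) ≠ 0 := by exact_mod_cast hL.ne'
  set a : ℂ := -I * (r : ℂ) ^ 2 / (4 * (R : ℂ) ^ 2) with ha
  set b : ℂ := -I * (R : ℂ) ^ 2 / (4 * (R : ℂ) ^ 2) with hb
  set C : ℂ := -(I * (h : ℂ) * (R : ℂ) ^ 2 / ((L : ℂ) * (μ : ℂ))) with hC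
  -- key argument identity
  have key : ∀ (s : ℝ) (α : ℝ),
      ((Complex.exp (3 * (π : ℂ) * I / 4) * (α : ℂ) / (R : ℂ) * (s : ℂ)) / 2) ^ 2 =
        (-I * (s : ℂ) ^ 2 / (4 * (R : ℂ) ^ 2)) * (α : ℂ) ^ 2 := by
    intro s α
    have h1 : ((Complex.exp (3 * (π : ℂ) * I / 4) * (α : ℂ) / (R : ℂ) * (s : ℂ)) / 2) ^ 2 =
        Complex.exp (3 * (π : ℂ) * I / 4) ^ 2 * ((s : ℂ) ^ 2 / (4 * (R : ℂ) ^ 2)) * (α : ℂ) ^ 2 := by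
      field_simp
      ring
    rw [h1, exp_sq]
    ring
  -- derivative of φ(t) = Fc (b t) - Fc (a t) at 0
  have hbd : HasDerivAt (fun t : ℂ => b * t) b 0 := by
    simpa using (hasDerivAt_id (0 : ℂ)).const_mul b
  have had : HasDerivAt (fun t : ℂ => a * t) a 0 := by
    simpa using (hasDerivAt_id (0 : ℂ)).const_mul a
  have hFd0b : HasDerivAt Fc (-1) (b * 0) := by simpa using Fc_hasDerivAt
  have hFd0a : HasDerivAt Fc (-1) (a * 0) := by simpa using Fc_hasDerivAt
  have h1 : HasDerivAt (fun t : ℂ => Fc (b * t)) (-1 * b) 0 := by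
    exact HasDerivAt.comp (0 : ℂ) hFd0b hbd
  have h2 : HasDerivAt (fun t : ℂ => Fc (a * t)) (-1 * a) 0 := by
    exact HasDerivAt.comp (0 : ℂ) hFd0a had
  have hderiv : HasDerivAt (fun t : ℂ => Fc (b * t) - Fc (a * t)) (a - b) 0 := by
    have := h1.sub h2
    rwa [show -1 * b - -1 * a = a - b by ring] at this
  have hs : Tendsto (slope (fun t : ℂ => Fc (b * t) - Fc (a * t)) 0) (𝓝[≠] (0 : ℂ))
      (𝓝 (a - b)) := hasDerivAt_iff_tendsto_slope.mp hderiv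
  -- α ↦ α² tends to punctured neighborhood of 0
  have Tsq : Tendsto (fun α : ℝ => ((α : ℂ)) ^ 2) (𝓝[>] (0 : ℝ)) (𝓝[≠] (0 : ℂ)) := by
    rw [tendsto_nhdsWithin_iff]
    constructor
    · have : Tendsto (fun α : ℝ => ((α : ℂ)) ^ 2) (𝓝 0) (𝓝 0) := by
        exact (Complex.continuous_ofReal.pow 2).tendsto' 0 0 (by simp)
      exact this.mono_left nhdsWithin_le_nhds
    · filter_upwards [self_mem_nhdsWithin] with α hα
      simp only [Set.mem_compl_iff, Set.mem_singleton_iff]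
      exact pow_ne_zero _ (by exact_mod_cast (ne_of_gt hα))
  have T3 : Tendsto (fun α : ℝ =>
      slope (fun t : ℂ => Fc (b * t) - Fc (a * t)) 0 ((α : ℂ) ^ 2)) (𝓝[>] (0 : ℝ))
      (𝓝 (a - b)) := hs.comp Tsq
  -- Fc (b α²) → 1
  have Tb : Tendsto (fun α : ℝ => b * ((α : ℂ)) ^ 2) (𝓝[>] (0 : ℝ)) (𝓝 0) := by
    have : Tendsto (fun α : ℝ => b * ((α : ℂ)) ^ 2) (𝓝 0) (𝓝 0) := by
      exact (continuous_const.mul (Complex.continuous_ofReal.pow 2)).tendsto' 0 0 (by simp)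
    exact this.mono_left nhdsWithin_le_nhds
  have T4 : Tendsto (fun α : ℝ => Fc (b * ((α : ℂ)) ^ 2)) (𝓝[>] (0 : ℝ)) (𝓝 1) := by
    have := hFc.continuousAt.tendsto.comp Tb
    rwa [Fc_zero] at this
  -- the limit of the product form
  have hlim : Tendsto (fun α : ℝ =>
      C * slope (fun t : ℂ => Fc (b * t) - Fc (a * t)) 0 ((α : ℂ) ^ 2) *
        (Fc (b * ((α : ℂ)) ^ 2))⁻¹) (𝓝[>] (0 : ℝ)) (𝓝 (C * (a - b) * (1 : ℂ)⁻¹)) :=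
    (tendsto_const_nhds.mul T3).mul (T4.inv₀ one_ne_zero)
  -- the limit value is the Poiseuille profile
  have hval : C * (a - b) * (1 : ℂ)⁻¹ = ((h * (R ^ 2 - r ^ 2) / (4 * μ * L) : ℝ) : ℂ) := by
    have hab : a - b = I * ((R : ℂ) ^ 2 - (r : ℂ) ^ 2) / (4 * (R : ℂ) ^ 2) := by
      rw [ha, hb]; field_simp; ring
    rw [inv_one, mul_one, hab, hC]
    push_cast
    field_simp
    ring_nf
    rw [Complex.I_sq]
    ring
  rw [← hval]
  -- eventual equality
  apply hlim.congr'
  filter_upwards [self_mem_nhdsWithin, T4.eventually_ne one_ne_zero] with α hα hne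
  have hα0 : (α : ℂ) ≠ 0 := by exact_mod_cast (ne_of_gt hα)
  have hα2 : ((α : ℂ)) ^ 2 ≠ 0 := pow_ne_zero _ hα0
  rw [J0_eq_Fc, J0_eq_Fc, key r α, key R α]
  rw [slope_def_field]
  simp only [mul_zero, Fc_zero, sub_self, sub_zero, ← ha, ← hb]
  set A := Fc (a * ((α : ℂ)) ^ 2) with hA
  set B := Fc (b * ((α : ℂ)) ^ 2) with hB
  rw [hC]
  field_simp [Lne, μne, hα0]
end

section
/- Let μ, R, L, h be positive reals and for α > 0 define the Womersley flow rate q(α) = (−ĵ π h R⁴/(L μ α²)) · [1 + 2 exp(πĵ/4) J₁(exp(3πĵ/4) α) / (α J₀(exp(3πĵ/4) α))]. Then q(α) converges to the steady Poiseuille flow rate in the quasi-steady limit: q(α) → π h R⁴/(8 μ L) as α → 0⁺. -/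
open Complex Real Filter

noncomputable def c0 (k : ℕ) : ℂ := (-1) ^ k / (4 ^ k * ((k.factorial : ℂ)) ^ 2)
noncomputable def c1 (k : ℕ) : ℂ :=
  (-1) ^ k / (4 ^ k * ((k.factorial : ℂ) * ((k + 1).factorial : ℂ)))
noncomputable def eG (k : ℕ) : ℂ := c0 (k + 1) - c1 (k + 1)


lemma fact_ne (k : ℕ) : ((k.factorial : ℂ)) ≠ 0 :=
  Nat.cast_ne_zero.2 k.factorial_ne_zero

lemma four_pow_ne (k : ℕ) : ((4:ℂ)) ^ k ≠ 0 := pow_ne_zero _ (by norm_num)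

lemma J0_eq (z : ℂ) : J0 z = ∑' k : ℕ, c0 k * (z ^ 2) ^ k := by
  apply tsum_congr
  intro k
  have hp : (z / 2) ^ (2 * k) = (z ^ 2) ^ k / 4 ^ k := by
    rw [pow_mul, show (z/2)^2 = z^2/4 by ring, div_pow]
  rw [hp, c0]
  field_simp [four_pow_ne, fact_ne]

lemma J1_eq (z : ℂ) : J1 z = (z / 2) * ∑' k : ℕ, c1 k * (z ^ 2) ^ k := by
  rw [← tsum_mul_left]
  apply tsum_congr
  intro k
  have hp : (z / 2) ^ (2 * k + 1) = ((z ^ 2) ^ k / 4 ^ k) * (z / 2) := by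
    rw [pow_succ, pow_mul, show (z/2)^2 = z^2/4 by ring, div_pow]
  rw [hp, c1]
  field_simp [four_pow_ne, fact_ne]

lemma summable_pow_of_le (w : ℂ) (hw : ‖w‖ ≤ 1) (a : ℕ → ℂ)
    (ha : ∀ k, ‖a k‖ ≤ (1/4:ℝ)^k) : Summable fun k => a k * w ^ k := by
  apply Summable.of_norm_bounded (g := fun k => (1/4:ℝ)^k)
    (summable_geometric_of_lt_one (by norm_num) (by norm_num))
  intro k
  rw [norm_mul, norm_pow]
  calc ‖a k‖ * ‖w‖ ^ k ≤ (1/4:ℝ)^k * 1 ^ k := by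
        apply mul_le_mul (ha k) _ (by positivity) (by positivity)
        exact pow_le_pow_left₀ (norm_nonneg _) hw k
    _ = (1/4:ℝ)^k := by simp

lemma norm_c0_le' (k : ℕ) : ‖c0 k‖ ≤ (1/4 : ℝ) ^ k := by
  have hn : ‖c0 k‖ = 1 / (4^k * ((k.factorial:ℝ))^2) := by
    simp [c0, norm_div, norm_mul, norm_pow, Complex.norm_natCast]
  rw [hn, div_le_iff₀ (by positivity)]
  have h1 : (1:ℝ) ≤ (k.factorial : ℝ) := by exact_mod_cast k.factorial_pos
  calc (1:ℝ) = 1 * 1 := by ring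
    _ ≤ ((1/4:ℝ)^k * 4^k) * ((k.factorial:ℝ))^2 := by
        apply mul_le_mul _ (by nlinarith) (by norm_num) (by positivity)
        rw [← mul_pow]; norm_num
    _ = (1/4)^k * (4^k * (k.factorial:ℝ)^2) := by ring

lemma norm_c1_le' (k : ℕ) : ‖c1 k‖ ≤ (1/4 : ℝ) ^ k := by
  have hn : ‖c1 k‖ = 1 / (4^k * ((k.factorial:ℝ) * ((k+1).factorial : ℝ))) := by
    simp [c1, norm_div, norm_mul, norm_pow, Complex.norm_natCast]
  rw [hn, div_le_iff₀ (by positivity)]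
  have h1 : (1:ℝ) ≤ (k.factorial : ℝ) := by exact_mod_cast k.factorial_pos
  have h2 : (1:ℝ) ≤ ((k+1).factorial : ℝ) := by exact_mod_cast (k+1).factorial_pos
  calc (1:ℝ) = 1 * 1 := by ring
    _ ≤ ((1/4:ℝ)^k * 4^k) * ((k.factorial:ℝ) * ((k+1).factorial:ℝ)) := by
        apply mul_le_mul _ (by nlinarith) (by norm_num) (by positivity)
        rw [← mul_pow]; norm_num
    _ = (1/4)^k * (4^k * ((k.factorial:ℝ) * ((k+1).factorial:ℝ))) := by ring

lemma norm_eG_le (k : ℕ) : ‖eG k‖ ≤ (1/4 : ℝ) ^ k := by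
  calc ‖eG k‖ ≤ ‖c0 (k+1)‖ + ‖c1 (k+1)‖ := norm_sub_le _ _
    _ ≤ (1/4:ℝ)^(k+1) + (1/4:ℝ)^(k+1) := add_le_add (norm_c0_le' _) (norm_c1_le' _)
    _ ≤ (1/4:ℝ)^k := by
        rw [pow_succ]
        have : (0:ℝ) ≤ (1/4:ℝ)^k := by positivity
        nlinarith

lemma series_diff (w : ℂ) (hw : ‖w‖ ≤ 1) :
    (∑' k : ℕ, c0 k * w ^ k) - (∑' k : ℕ, c1 k * w ^ k)
      = w * ∑' k : ℕ, eG k * w ^ k := by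
  have hs0 := summable_pow_of_le w hw c0 norm_c0_le'
  have hs1 := summable_pow_of_le w hw c1 norm_c1_le'
  rw [← hs0.tsum_sub hs1]
  have h1 : ∀ k : ℕ, c0 k * w ^ k - c1 k * w ^ k = (c0 k - c1 k) * w ^ k := by
    intro k; ring
  rw [tsum_congr h1]
  have hsd : Summable fun k => (c0 k - c1 k) * w ^ k := by
    have := hs0.sub hs1
    apply this.congr
    intro k; ring
  rw [hsd.tsum_eq_zero_add]
  have hz : c0 0 - c1 0 = 0 := by
    simp [c0, c1, Nat.factorial]
  rw [hz]
  have h2 : ∀ k : ℕ, (c0 (k+1) - c1 (k+1)) * w ^ (k+1) = w * (eG k * w ^ k) := by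
    intro k; rw [eG]; ring
  rw [tsum_congr h2, tsum_mul_left]
  simp

lemma tendsto_tsum_pow (a : ℕ → ℂ) (hs : Summable fun k => ‖a k‖) :
    Tendsto (fun w : ℂ => ∑' k : ℕ, a k * w ^ k) (nhds 0) (nhds (a 0)) := by
  rw [← tendsto_sub_nhds_zero_iff]
  have hs1 : Summable fun k => ‖a (k + 1)‖ := (summable_nat_add_iff 1).2 hs
  have key : ∀ᶠ w : ℂ in nhds 0,
      ‖(∑' k : ℕ, a k * w ^ k) - a 0‖ ≤ (∑' k : ℕ, ‖a (k+1)‖) * ‖w‖ := by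
    have hball : ∀ᶠ w : ℂ in nhds 0, ‖w‖ ≤ 1 := by
      filter_upwards [Metric.ball_mem_nhds (0:ℂ) one_pos] with w hw
      rw [Metric.mem_ball, Complex.dist_eq, sub_zero] at hw
      exact hw.le
    filter_upwards [hball] with w hw
    have hble : ∀ k : ℕ, ‖a k * w ^ k‖ ≤ ‖a k‖ := by
      intro k
      rw [norm_mul, norm_pow]
      calc ‖a k‖ * ‖w‖ ^ k ≤ ‖a k‖ * 1 ^ k := by
            gcongr
        _ = ‖a k‖ := by simp
    have hsum : Summable fun k => a k * w ^ k := Summable.of_norm_bounded hs hble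
    have h1 : (∑' k : ℕ, a k * w ^ k) - a 0 = w * ∑' k : ℕ, a (k+1) * w ^ k := by
      rw [hsum.tsum_eq_zero_add]
      have h2 : ∑' k : ℕ, a (k+1) * w ^ (k+1) = ∑' k : ℕ, w * (a (k+1) * w ^ k) := by
        apply tsum_congr; intro k; ring
      rw [h2, tsum_mul_left]
      simp
    rw [h1, norm_mul, mul_comm]
    gcongr
    have hble1 : ∀ k : ℕ, ‖a (k+1) * w ^ k‖ ≤ ‖a (k+1)‖ := by
      intro k
      rw [norm_mul, norm_pow]
      calc ‖a (k+1)‖ * ‖w‖ ^ k ≤ ‖a (k+1)‖ * 1 ^ k := by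
            gcongr
        _ = ‖a (k+1)‖ := by simp
    have hsn : Summable fun k => ‖a (k+1) * w ^ k‖ :=
      Summable.of_nonneg_of_le (fun k => norm_nonneg _) hble1 hs1
    calc ‖∑' k : ℕ, a (k+1) * w ^ k‖ ≤ ∑' k : ℕ, ‖a (k+1) * w ^ k‖ :=
          norm_tsum_le_tsum_norm hsn
      _ ≤ ∑' k : ℕ, ‖a (k+1)‖ := hsn.tsum_le_tsum hble1 hs1
  apply squeeze_zero_norm' key
  have := (tendsto_const_nhds (x := ∑' k : ℕ, ‖a (k+1)‖) (f := nhds (0:ℂ))).mul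
    (tendsto_norm_zero)
  simpa using this

lemma summable_norm_c0 : Summable fun k => ‖c0 k‖ :=
  Summable.of_nonneg_of_le (fun k => norm_nonneg _) norm_c0_le'
    (summable_geometric_of_lt_one (by norm_num) (by norm_num))

lemma summable_norm_eG : Summable fun k => ‖eG k‖ :=
  Summable.of_nonneg_of_le (fun k => norm_nonneg _) norm_eG_le
    (summable_geometric_of_lt_one (by norm_num) (by norm_num))

lemma c0_zero : c0 0 = 1 := by simp [c0]

lemma eG_zero : eG 0 = -1/8 := by
  simp [eG, c0, c1, Nat.factorial]
  norm_num

lemma beta_sq : Complex.exp (3 * (π:ℂ) * I / 4) ^ 2 = -I := by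
  rw [← Complex.exp_nat_mul]
  have h : (2:ℕ) * (3 * (π:ℂ) * I / 4) = (π:ℂ) * I + (π:ℂ)/2 * I := by push_cast; ring
  rw [h, Complex.exp_add, Complex.exp_pi_mul_I, Complex.exp_mul_I]
  simp [Complex.cos_pi_div_two, Complex.sin_pi_div_two]

lemma e_beta : Complex.exp ((π:ℂ) * I / 4) * Complex.exp (3 * (π:ℂ) * I / 4) = -1 := by
  rw [← Complex.exp_add]
  have h : (π:ℂ) * I / 4 + 3 * (π:ℂ) * I / 4 = (π:ℂ) * I := by ring
  rw [h, Complex.exp_pi_mul_I]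

theorem womersley_flow_rate_tendsto_poiseuille
    (μ R L h : ℝ) (hμ : 0 < μ) (hR : 0 < R) (hL : 0 < L) (hh : 0 < h) :
    Tendsto
      (fun α : ℝ =>
        (-I * (π : ℂ) * (h : ℂ) * (R : ℂ) ^ 4 / ((L : ℂ) * (μ : ℂ) * (α : ℂ) ^ 2)) *
          (1 + 2 * Complex.exp ((π : ℂ) * I / 4) * J1 (Complex.exp (3 * (π : ℂ) * I / 4) * (α : ℂ))
            / ((α : ℂ) * J0 (Complex.exp (3 * (π : ℂ) * I / 4) * (α : ℂ)))))
      (nhdsWithin 0 (Set.Ioi 0))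
      (nhds ((π * h * R ^ 4 / (8 * μ * L) : ℝ) : ℂ)) := by
  set F := nhdsWithin (0:ℝ) (Set.Ioi 0) with hF
  set C : ℂ := (π : ℂ) * (h : ℂ) * (R : ℂ) ^ 4 / ((L : ℂ) * (μ : ℂ)) with hC
  have hμ0 : (μ : ℂ) ≠ 0 := by exact_mod_cast hμ.ne'
  have hL0 : (L : ℂ) ≠ 0 := by exact_mod_cast hL.ne'
  -- the substituted variable
  have htw : Tendsto (fun α : ℝ => -I * (α:ℂ)^2) F (nhds 0) := by
    have hc : Continuous fun α : ℝ => -I * (α:ℂ)^2 := by continuity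
    have := (hc.tendsto 0).mono_left (nhdsWithin_le_nhds (s := Set.Ioi (0:ℝ)))
    simpa using this
  have hg0 : Tendsto (fun α : ℝ => ∑' k : ℕ, c0 k * (-I * (α:ℂ)^2) ^ k) F (nhds 1) := by
    have := (tendsto_tsum_pow c0 summable_norm_c0).comp htw
    rwa [c0_zero] at this
  have hG : Tendsto (fun α : ℝ => ∑' k : ℕ, eG k * (-I * (α:ℂ)^2) ^ k) F (nhds (-1/8)) := by
    have := (tendsto_tsum_pow eG summable_norm_eG).comp htw
    rwa [eG_zero] at this
  have hne : ∀ᶠ α : ℝ in F, (∑' k : ℕ, c0 k * (-I * (α:ℂ)^2) ^ k) ≠ 0 :=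
    hg0.eventually_ne one_ne_zero
  have hlim : Tendsto (fun α : ℝ =>
      -C * ((∑' k : ℕ, eG k * (-I * (α:ℂ)^2) ^ k) / (∑' k : ℕ, c0 k * (-I * (α:ℂ)^2) ^ k)))
      F (nhds (-C * ((-1/8) / 1))) :=
    (hG.div hg0 one_ne_zero).const_mul _
  have hval : -C * ((-1/8 : ℂ) / 1) = ((π * h * R ^ 4 / (8 * μ * L) : ℝ) : ℂ) := by
    rw [hC]
    push_cast
    field_simp
  rw [← hval]
  apply hlim.congr'
  have hαpos : ∀ᶠ α : ℝ in F, α ∈ Set.Ioi (0:ℝ) := eventually_mem_nhdsWithin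
  have hαsm : ∀ᶠ α : ℝ in F, |α| < 1 := by
    apply eventually_nhdsWithin_of_eventually_nhds
    filter_upwards [Metric.ball_mem_nhds (0:ℝ) one_pos] with α hα
    rw [Metric.mem_ball, Real.dist_eq, sub_zero] at hα
    exact hα
  filter_upwards [hαpos, hαsm, hne] with α hα hαs hnea
  have hα0 : (α:ℂ) ≠ 0 := by
    simp only [ne_eq, Complex.ofReal_eq_zero]
    exact (Set.mem_Ioi.1 hα).ne'
  set a := ∑' k : ℕ, c0 k * (-I * (α:ℂ)^2) ^ k with ha
  set b := ∑' k : ℕ, c1 k * (-I * (α:ℂ)^2) ^ k with hb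
  set g := ∑' k : ℕ, eG k * (-I * (α:ℂ)^2) ^ k with hg
  have hz2 : (Complex.exp (3 * (π:ℂ) * I / 4) * (α:ℂ)) ^ 2 = -I * (α:ℂ)^2 := by
    rw [mul_pow, beta_sq]
  have hwnorm : ‖-I * (α:ℂ)^2‖ ≤ 1 := by
    rw [norm_mul, norm_neg, Complex.norm_I, one_mul, norm_pow, Complex.norm_real,
      Real.norm_eq_abs]
    nlinarith [abs_nonneg α]
  have hab : a - b = (-I * (α:ℂ)^2) * g := series_diff _ hwnorm
  rw [J0_eq, J1_eq, hz2]
  rw [← ha, ← hb]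
  set E := Complex.exp ((π:ℂ) * I / 4) with hE
  set B := Complex.exp (3 * (π:ℂ) * I / 4) with hB
  have hEB : E * B = -1 := e_beta
  -- now pure algebra
  have hfrac : 2 * E * (B * (α:ℂ) / 2 * b) / ((α:ℂ) * a) = -(b / a) := by
    have h1 : 2 * E * (B * (α:ℂ) / 2 * b) = -(b * (α:ℂ)) := by
      linear_combination ((α:ℂ) * b) * hEB
    rw [h1]
    field_simp
  rw [hfrac]
  have h2 : (1 : ℂ) + -(b / a) = (-I * (α:ℂ)^2) * g / a := by
    rw [← hab]
    field_simp
    ring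
  rw [h2]
  rw [hC]
  field_simp
  linear_combination (-((h:ℂ) * (R:ℂ) ^ 4 * g)) * Complex.I_sq
end
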